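/- Let μ be the determinantal point process on X = {0,1}^E with kernel K (bounded self-adjoint, 0 ≤ K ≤ I), and let Λ ⊆ E be a finite set such that the finite matrix I_Λ − K_Λ is invertible, where K_Λ := (K(x,y))_{x,y∈Λ}. Set A_{[Λ]} := K_Λ(I_Λ − K_Λ)^{-1}. Then for every subset ζ ⊆ Λ, μ({ξ ∈ X : ξ ∩ Λ = ζ}) = det(I_Λ − K_Λ) · det (A_{[Λ]}(x,y))_{x,y∈ζ}, where the determinant over the empty set is 1. -/

import Mathlib

open MeasureTheory Finset
/-- The standard basis vector `e_x` of `l²(E)`. -/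
noncomputable def evec {E : Type*} [DecidableEq E] (x : E) : lp (fun _ : E => ℂ) 2 :=
  lp.single 2 x 1

/-- The matrix entries `K(x,y) = ⟨e_x, K e_y⟩` of a bounded operator on `l²(E)`. -/
noncomputable def matEnt {E : Type*} [DecidableEq E]
    (K : lp (fun _ : E => ℂ) 2 →L[ℂ] lp (fun _ : E => ℂ) 2) (x y : E) : ℂ :=
  inner ℂ (evec x) (K (evec y))

section DetLemmas
variable {ι : Type*} [Fintype ι] [DecidableEq ι]
/-- det of a matrix that is the identity outside rows/cols of `z` equals det of the `z`-block. -/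
lemma det_ite_one (z : Finset ι) (P : Matrix ι ι ℂ) :
    (Matrix.of fun i j => if i ∈ z then P i j else (1 : Matrix ι ι ℂ) i j).det
      = (Matrix.of fun i j : z => P ↑i ↑j).det := by
  let e : {x // x ∈ z} ⊕ {x // x ∉ z} ≃ ι := Equiv.sumCompl (· ∈ z)
  rw [← Matrix.det_submatrix_equiv_self e]
  have h : (Matrix.of fun i j => if i ∈ z then P i j else (1 : Matrix ι ι ℂ) i j).submatrix e e
      = Matrix.fromBlocks (Matrix.of fun i j : z => P ↑i ↑j)
          (Matrix.of fun (i : {x // x ∈ z}) (j : {x // x ∉ z}) => P ↑i ↑j) 0 1 := by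
    ext i j
    rcases i with i | i <;> rcases j with j | j <;>
      simp [e, Matrix.one_apply, i.2, j.2, Subtype.ext_iff]
    · exact fun h => i.2 (h ▸ j.2)
  rw [h, Matrix.det_fromBlocks_zero₂₁, Matrix.det_one, mul_one]

lemma det_expand (M : Matrix ι ι ℂ) (D : Finset ι) :
    ∀ z : Finset ι, Disjoint z D →
    (Matrix.of fun i j => if i ∈ z then M i j else
        if i ∈ D then (1 - M) i j else (1 : Matrix ι ι ℂ) i j).det
      = ∑ T ∈ D.powerset, (-1 : ℂ) ^ T.card *
          (Matrix.of fun i j => if i ∈ z ∪ T then M i j else (1 : Matrix ι ι ℂ) i j).det := by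
  induction D using Finset.induction_on with
  | empty =>
    intro z _
    simp
  | @insert a D ha IH =>
    intro z hz
    have haz : a ∉ z := fun h => (Finset.disjoint_left.mp hz h) (mem_insert_self a D)
    have hzD : Disjoint z D := hz.mono_right (Finset.subset_insert a D)
    have hazD : Disjoint (insert a z) D := by
      rw [Finset.disjoint_left]
      intro x hx hxD
      rcases Finset.mem_insert.mp hx with rfl | hx
      · exact ha hxD
      · exact Finset.disjoint_left.mp hzD hx hxD
    set Nold : Matrix ι ι ℂ := Matrix.of fun i j => if i ∈ z then M i j else
        if i ∈ D then (1 - M) i j else (1 : Matrix ι ι ℂ) i j with hNold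
    have h1 : (Matrix.of fun i j => if i ∈ z then M i j else
        if i ∈ insert a D then (1 - M) i j else (1 : Matrix ι ι ℂ) i j)
        = Nold.updateRow a (fun j => (1 : Matrix ι ι ℂ) a j - M a j) := by
      ext i j
      rcases eq_or_ne i a with rfl | hi
      · simp [Nold, haz, ha, Matrix.sub_apply]
      · rcases Finset.decidableMem i z with h | h <;>
          simp [Nold, Matrix.updateRow_ne hi, Finset.mem_insert, hi]
    have h2 : Nold.updateRow a (fun j => (1 : Matrix ι ι ℂ) a j) = Nold := by
      ext i j
      rcases eq_or_ne i a with rfl | hi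
      · simp [Nold, haz, ha]
      · simp [Matrix.updateRow_ne hi]
    have h3 : Nold.updateRow a (fun j => M a j) = Matrix.of fun i j =>
        if i ∈ insert a z then M i j else
          if i ∈ D then (1 - M) i j else (1 : Matrix ι ι ℂ) i j := by
      ext i j
      rcases eq_or_ne i a with rfl | hi
      · simp
      · simp [Nold, Matrix.updateRow_ne hi, Finset.mem_insert, hi]
    have hsub : ∀ j, (1 : Matrix ι ι ℂ) a j - M a j
        = (fun j => (1 : Matrix ι ι ℂ) a j) j + (-1 : ℂ) • (fun j => M a j) j := by
      intro j; simp [sub_eq_add_neg]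
    have hdet : (Matrix.of fun i j => if i ∈ z then M i j else
        if i ∈ insert a D then (1 - M) i j else (1 : Matrix ι ι ℂ) i j).det
        = Nold.det - (Matrix.of fun i j => if i ∈ insert a z then M i j else
            if i ∈ D then (1 - M) i j else (1 : Matrix ι ι ℂ) i j).det := by
      rw [h1]
      have : (fun j => (1 : Matrix ι ι ℂ) a j - M a j)
          = (fun j => (1 : Matrix ι ι ℂ) a j) + fun j => (-1 : ℂ) • M a j := by
        funext j; simp [sub_eq_add_neg]
      rw [this, Matrix.det_updateRow_add]
      have hsm : (fun j => (-1 : ℂ) • M a j) = (-1 : ℂ) • fun j => M a j := rfl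
      rw [hsm, Matrix.det_updateRow_smul, h2, h3]
      ring
    rw [hdet, IH z hzD, IH (insert a z) hazD, Finset.sum_powerset_insert ha]
    have hre : ∀ T ∈ D.powerset, (-1 : ℂ) ^ (insert a T).card *
        (Matrix.of fun i j => if i ∈ z ∪ insert a T then M i j
          else (1 : Matrix ι ι ℂ) i j).det
        = -((-1 : ℂ) ^ T.card *
          (Matrix.of fun i j => if i ∈ insert a z ∪ T then M i j
            else (1 : Matrix ι ι ℂ) i j).det) := by
      intro T hT
      have haT : a ∉ T := fun h => ha (Finset.mem_powerset.mp hT h)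
      rw [Finset.card_insert_of_notMem haT, Finset.union_insert, ← Finset.insert_union]
      ring
    rw [Finset.sum_congr rfl hre, Finset.sum_neg_distrib, sub_eq_add_neg]

lemma lemB (M : Matrix ι ι ℂ) (hinv : IsUnit (1 - M)) (z : Finset ι) :
    (1 - M).det * (Matrix.of fun i j : z => (M * (1 - M)⁻¹) ↑i ↑j).det
      = ∑ T ∈ zᶜ.powerset, (-1 : ℂ) ^ T.card *
          (Matrix.of fun i j : (z ∪ T : Finset ι) => M ↑i ↑j).det := by
  have hdet : IsUnit (1 - M).det := (Matrix.isUnit_iff_isUnit_det _).mp hinv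
  have hAW : (M * (1 - M)⁻¹) * (1 - M) = M := by
    rw [Matrix.mul_assoc, Matrix.nonsing_inv_mul _ hdet, Matrix.mul_one]
  set A := M * (1 - M)⁻¹ with hA
  set N' : Matrix ι ι ℂ := Matrix.of fun i j => if i ∈ z then A i j else (1 : Matrix ι ι ℂ) i j
  have hprod : N' * (1 - M) = Matrix.of fun i j => if i ∈ z then M i j else
      if i ∈ zᶜ then (1 - M) i j else (1 : Matrix ι ι ℂ) i j := by
    ext i j
    by_cases hi : i ∈ z
    · have : (N' * (1 - M)) i j = (A * (1 - M)) i j := by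
        simp only [Matrix.mul_apply]
        exact Finset.sum_congr rfl fun k _ => by simp [N', hi]
      rw [this, hAW]
      simp [hi]
    · have : (N' * (1 - M)) i j = ((1 : Matrix ι ι ℂ) * (1 - M)) i j := by
        simp only [Matrix.mul_apply]
        exact Finset.sum_congr rfl fun k _ => by simp [N', hi]
      rw [this, Matrix.one_mul]
      simp [hi]
  have h1 : N'.det * (1 - M).det = (Matrix.of fun i j => if i ∈ z then M i j else
      if i ∈ zᶜ then (1 - M) i j else (1 : Matrix ι ι ℂ) i j).det := by
    rw [← Matrix.det_mul, hprod]
  have h2 := det_expand M zᶜ z disjoint_compl_right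
  have h3 : N'.det = (Matrix.of fun i j : z => A ↑i ↑j).det := det_ite_one z A
  calc (1 - M).det * (Matrix.of fun i j : z => A ↑i ↑j).det
      = N'.det * (1 - M).det := by rw [h3]; ring
    _ = ∑ T ∈ zᶜ.powerset, (-1 : ℂ) ^ T.card *
          (Matrix.of fun i j => if i ∈ z ∪ T then M i j else (1 : Matrix ι ι ℂ) i j).det := by
        rw [h1, h2]
    _ = _ := Finset.sum_congr rfl fun T _ => by rw [det_ite_one (z ∪ T) M]

end DetLemmas

section MeasLemmas
set_option linter.unusedSectionVars false
variable {E : Type*} [Countable E] [DecidableEq E]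

lemma hmeas (S : Finset E) : MeasurableSet {ξ : E → Bool | ∀ x ∈ S, ξ x = true} := by
  have h : {ξ : E → Bool | ∀ x ∈ S, ξ x = true}
      = ⋂ x ∈ (S : Set E), (fun ξ : E → Bool => ξ x) ⁻¹' {true} := by
    ext ξ; simp
  rw [h]
  exact MeasurableSet.biInter S.countable_toSet
    (fun x _ => (measurable_pi_apply x) (by trivial))

lemma hmeas2 (Λ ζ : Finset E) :
    MeasurableSet {ξ : E → Bool | ∀ x ∈ Λ, (ξ x = true ↔ x ∈ ζ)} := by
  have h : {ξ : E → Bool | ∀ x ∈ Λ, (ξ x = true ↔ x ∈ ζ)}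
      = ⋂ x ∈ (Λ : Set E), (fun ξ : E → Bool => ξ x) ⁻¹' {b | b = true ↔ x ∈ ζ} := by
    ext ξ; simp
  rw [h]
  exact MeasurableSet.biInter Λ.countable_toSet
    (fun x _ => (measurable_pi_apply x) (by trivial))

lemma myProdIndicator (S : Finset E) (ξ : E → Bool) :
    (∏ x ∈ S, (if ξ x = true then (1 : ℝ) else 0))
      = Set.indicator {ξ : E → Bool | ∀ x ∈ S, ξ x = true} (fun _ => (1 : ℝ)) ξ := by
  by_cases h : ∀ x ∈ S, ξ x = true
  · rw [Set.indicator_of_mem (show ξ ∈ {ξ : E → Bool | ∀ x ∈ S, ξ x = true} from h)]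
    exact Finset.prod_eq_one fun x hx => by simp [h x hx]
  · rw [Set.indicator_of_notMem (show ξ ∉ {ξ : E → Bool | ∀ x ∈ S, ξ x = true} from h)]
    push_neg at h
    obtain ⟨x, hx, hfx⟩ := h
    exact Finset.prod_eq_zero hx (by simp [hfx])

lemma lemA (μ : Measure (E → Bool)) [IsProbabilityMeasure μ]
    (Λ ζ : Finset E) (hζ : ζ ⊆ Λ) :
    (μ {ξ : E → Bool | ∀ x ∈ Λ, (ξ x = true ↔ x ∈ ζ)}).toReal
      = ∑ T ∈ (Λ \ ζ).powerset, (-1 : ℝ) ^ T.card *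
          (μ {ξ : E → Bool | ∀ x ∈ ζ ∪ T, ξ x = true}).toReal := by
  -- pointwise identity
  have hpt : ∀ ξ : E → Bool,
      Set.indicator {ξ : E → Bool | ∀ x ∈ Λ, (ξ x = true ↔ x ∈ ζ)} (fun _ => (1 : ℝ)) ξ
        = ∑ T ∈ (Λ \ ζ).powerset, (-1 : ℝ) ^ T.card *
            Set.indicator {ξ : E → Bool | ∀ x ∈ ζ ∪ T, ξ x = true} (fun _ => (1 : ℝ)) ξ := by
    intro ξ
    have hL : Set.indicator {ξ : E → Bool | ∀ x ∈ Λ, (ξ x = true ↔ x ∈ ζ)} (fun _ => (1 : ℝ)) ξ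
        = (∏ x ∈ ζ, (if ξ x = true then (1 : ℝ) else 0)) *
            ∏ x ∈ Λ \ ζ, (1 - if ξ x = true then (1 : ℝ) else 0) := by
      by_cases h : ∀ x ∈ Λ, (ξ x = true ↔ x ∈ ζ)
      · rw [Set.indicator_of_mem (show ξ ∈ {ξ : E → Bool | ∀ x ∈ Λ, (ξ x = true ↔ x ∈ ζ)} from h)]
        rw [Finset.prod_eq_one fun x hx => by simp [(h x (hζ hx)).mpr hx],
          Finset.prod_eq_one fun x hx => ?_, mul_one]
        · rcases Finset.mem_sdiff.mp hx with ⟨hxΛ, hxζ⟩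
          have : ξ x ≠ true := fun hh => hxζ ((h x hxΛ).mp hh)
          simp [this]
      · rw [Set.indicator_of_notMem
            (show ξ ∉ {ξ : E → Bool | ∀ x ∈ Λ, (ξ x = true ↔ x ∈ ζ)} from h)]
        push_neg at h
        obtain ⟨x, hxΛ, hx⟩ := h
        rcases hx with ⟨hxt, hxζ⟩ | ⟨hxf, hxζ⟩
        · rw [Finset.prod_eq_zero (Finset.mem_sdiff.mpr ⟨hxΛ, hxζ⟩) (by simp [hxt]),
            mul_zero]
        · rw [Finset.prod_eq_zero hxζ (by simp [hxf]), zero_mul]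
    rw [hL]
    have hexp : (∏ x ∈ Λ \ ζ, ((1 : ℝ) - if ξ x = true then (1 : ℝ) else 0))
        = ∑ T ∈ (Λ \ ζ).powerset, (-1 : ℝ) ^ T.card *
            ∏ x ∈ T, (if ξ x = true then (1 : ℝ) else 0) := by
      have : ∀ x, ((1 : ℝ) - if ξ x = true then (1 : ℝ) else 0)
          = (fun x => -(if ξ x = true then (1 : ℝ) else 0)) x + (fun _ => (1 : ℝ)) x := by
        intro x; ring
      rw [Finset.prod_congr rfl fun x _ => this x, Finset.prod_add]
      refine Finset.sum_congr rfl fun T hT => ?_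
      rw [Finset.prod_const_one, mul_one]
      have : (∏ i ∈ T, -(if ξ i = true then (1 : ℝ) else 0))
          = ∏ i ∈ T, ((-1 : ℝ) * (if ξ i = true then (1 : ℝ) else 0)) := by
        refine Finset.prod_congr rfl fun i _ => by ring
      rw [this, Finset.prod_mul_distrib, Finset.prod_const]
    rw [hexp, Finset.mul_sum]
    refine Finset.sum_congr rfl fun T hT => ?_
    have hdisj : Disjoint ζ T := by
      have := Finset.mem_powerset.mp hT
      exact Finset.disjoint_left.mpr fun x hxζ hxT =>
        (Finset.mem_sdiff.mp (this hxT)).2 hxζ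
    rw [← myProdIndicator, Finset.prod_union hdisj]
    ring
  -- integrate
  have hint : ∀ S : Finset E, Integrable
      (fun ξ => Set.indicator {ξ : E → Bool | ∀ x ∈ S, ξ x = true} (fun _ => (1 : ℝ)) ξ) μ :=
    fun S => (integrable_const (1 : ℝ)).indicator (hmeas S)
  calc (μ {ξ : E → Bool | ∀ x ∈ Λ, (ξ x = true ↔ x ∈ ζ)}).toReal
      = ∫ ξ, Set.indicator {ξ : E → Bool | ∀ x ∈ Λ, (ξ x = true ↔ x ∈ ζ)}
          (fun _ => (1 : ℝ)) ξ ∂μ := by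
        rw [integral_indicator_const (1 : ℝ) (hmeas2 Λ ζ), smul_eq_mul, mul_one, measureReal_def]
    _ = ∫ ξ, ∑ T ∈ (Λ \ ζ).powerset, (-1 : ℝ) ^ T.card *
          Set.indicator {ξ : E → Bool | ∀ x ∈ ζ ∪ T, ξ x = true} (fun _ => (1 : ℝ)) ξ ∂μ := by
        exact integral_congr_ae (Filter.Eventually.of_forall hpt)
    _ = ∑ T ∈ (Λ \ ζ).powerset, (-1 : ℝ) ^ T.card *
          (μ {ξ : E → Bool | ∀ x ∈ ζ ∪ T, ξ x = true}).toReal := by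
        rw [integral_finset_sum _ fun T _ => ((hint (ζ ∪ T)).const_mul _)]
        refine Finset.sum_congr rfl fun T _ => ?_
        rw [integral_const_mul, integral_indicator_const (1 : ℝ) (hmeas (ζ ∪ T)),
          smul_eq_mul, mul_one, measureReal_def]

end MeasLemmas

lemma det_subtype {E : Type*} [DecidableEq E] (Λ : Finset E)
    (g : {x // x ∈ Λ} → {x // x ∈ Λ} → ℂ) (S : Finset E) (hS : S ⊆ Λ) :
    (Matrix.of fun i j : (S.subtype (· ∈ Λ) : Finset {x // x ∈ Λ}) => g ↑i ↑j).det
      = (Matrix.of fun i j : S => g ⟨↑i, hS i.2⟩ ⟨↑j, hS j.2⟩).det := by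
  let e : {x // x ∈ S} ≃ {i : {x // x ∈ Λ} // i ∈ S.subtype (· ∈ Λ)} :=
    { toFun := fun i => ⟨⟨↑i, hS i.2⟩, Finset.mem_subtype.mpr i.2⟩
      invFun := fun i => ⟨↑↑i, Finset.mem_subtype.mp i.2⟩
      left_inv := fun i => rfl
      right_inv := fun i => rfl }
  rw [← Matrix.det_submatrix_equiv_self e
    (Matrix.of fun i j : (S.subtype (· ∈ Λ) : Finset {x // x ∈ Λ}) => g ↑i ↑j)]
  rfl

lemma subtype_union_eq {E : Type*} [DecidableEq E] (Λ S T : Finset E) :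
    ((S ∪ T).subtype (· ∈ Λ) : Finset {x // x ∈ Λ})
      = S.subtype (· ∈ Λ) ∪ T.subtype (· ∈ Λ) := by
  ext i; simp [Finset.mem_subtype]

lemma compl_subtype_eq {E : Type*} [DecidableEq E] (Λ ζ : Finset E) :
    ((ζ.subtype (· ∈ Λ) : Finset {x // x ∈ Λ}))ᶜ = (Λ \ ζ).subtype (· ∈ Λ) := by
  ext i
  simp [Finset.mem_subtype, Finset.mem_compl, i.2]

/-- **Local marginals of a determinantal point process.**
Let `μ` be the DPP on `X = {0,1}^E` with kernel `K` (bounded self-adjoint, `0 ≤ K ≤ I`),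
and let `Λ ⊆ E` be finite with `I_Λ - K_Λ` invertible; set `A_{[Λ]} = K_Λ (I_Λ - K_Λ)⁻¹`.
Then for every `ζ ⊆ Λ`,
`μ {ξ : ξ ∩ Λ = ζ} = det (I_Λ - K_Λ) • det (A_{[Λ]}(x,y))_{x,y ∈ ζ}`. -/
theorem statement1 {E : Type*} [Countable E] [DecidableEq E]
    (K : lp (fun _ : E => ℂ) 2 →L[ℂ] lp (fun _ : E => ℂ) 2)
    (hsa : ∀ f g : lp (fun _ : E => ℂ) 2, (inner ℂ (K f) g : ℂ) = inner ℂ f (K g))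
    (hpos : ∀ f : lp (fun _ : E => ℂ) 2, 0 ≤ (inner ℂ f (K f) : ℂ).re)
    (hle : ∀ f : lp (fun _ : E => ℂ) 2, (inner ℂ f (K f) : ℂ).re ≤ (inner ℂ f f : ℂ).re)
    (μ : Measure (E → Bool)) [IsProbabilityMeasure μ]
    (hcorr : ∀ S : Finset E,
      ((μ {ξ : E → Bool | ∀ x ∈ S, ξ x = true}).toReal : ℂ) =
        Matrix.det (Matrix.of fun i j : S => matEnt K i j))
    (Λ : Finset E)
    (hinv : IsUnit (1 - Matrix.of fun i j : Λ => matEnt K i j))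
    (ζ : Finset E) (hζ : ζ ⊆ Λ) :
    ((μ {ξ : E → Bool | ∀ x ∈ Λ, (ξ x = true ↔ x ∈ ζ)}).toReal : ℂ) =
      Matrix.det (1 - Matrix.of fun i j : Λ => matEnt K i j) *
        Matrix.det (Matrix.of fun i j : ζ =>
          ((Matrix.of fun i j : Λ => matEnt K i j) *
              (1 - Matrix.of fun i j : Λ => matEnt K i j)⁻¹)
            ⟨(i : E), hζ i.2⟩ ⟨(j : E), hζ j.2⟩) := by
  set M : Matrix {x // x ∈ Λ} {x // x ∈ Λ} ℂ := Matrix.of fun i j : Λ => matEnt K i j with hM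
  set z : Finset {x // x ∈ Λ} := ζ.subtype (· ∈ Λ) with hz
  -- LHS
  have hAC : ((μ {ξ : E → Bool | ∀ x ∈ Λ, (ξ x = true ↔ x ∈ ζ)}).toReal : ℂ)
      = ∑ T ∈ (Λ \ ζ).powerset, (-1 : ℂ) ^ T.card *
          (Matrix.of fun i j : (ζ ∪ T : Finset E) => matEnt K ↑i ↑j).det := by
    rw [lemA μ Λ ζ hζ]
    push_cast
    exact Finset.sum_congr rfl fun T _ => by rw [hcorr (ζ ∪ T)]
  rw [hAC]
  -- RHS via lemB
  have hRHS := lemB M hinv z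
  have hzdet : (Matrix.of fun i j : z => (M * (1 - M)⁻¹) ↑i ↑j).det
      = (Matrix.of fun i j : ζ =>
          (M * (1 - M)⁻¹) ⟨(i : E), hζ i.2⟩ ⟨(j : E), hζ j.2⟩).det :=
    det_subtype Λ (fun i j => (M * (1 - M)⁻¹) i j) ζ hζ
  rw [← hzdet, hRHS]
  -- reindex the sum
  have hsum : ∑ T ∈ (Λ \ ζ).powerset, (-1 : ℂ) ^ T.card *
        (Matrix.of fun i j : (ζ ∪ T : Finset E) => matEnt K ↑i ↑j).det
      = ∑ T' ∈ zᶜ.powerset, (-1 : ℂ) ^ T'.card *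
        (Matrix.of fun i j : (z ∪ T' : Finset {x // x ∈ Λ}) => M ↑i ↑j).det := by
    refine Finset.sum_nbij' (fun T : Finset E => (T.subtype (· ∈ Λ) : Finset {x // x ∈ Λ}))
      (fun T' : Finset {x // x ∈ Λ} => T'.map (Function.Embedding.subtype (· ∈ Λ)))
      ?_ ?_ ?_ ?_ ?_
    · intro T hT
      rw [Finset.mem_powerset] at hT ⊢
      rw [compl_subtype_eq]
      intro i hi
      exact Finset.mem_subtype.mpr (hT (Finset.mem_subtype.mp hi))
    · intro T' hT'
      rw [Finset.mem_powerset] at hT' ⊢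
      intro x hx
      rcases Finset.mem_map.mp hx with ⟨i, hi, rfl⟩
      have := hT' hi
      rw [compl_subtype_eq] at this
      exact Finset.mem_subtype.mp this
    · intro T hT
      rw [Finset.mem_powerset] at hT
      rw [Finset.subtype_map]
      exact Finset.filter_true_of_mem fun x hx => (Finset.mem_sdiff.mp (hT hx)).1
    · intro T' hT'
      ext i
      simp [Finset.mem_subtype, Finset.mem_map]
    · intro T hT
      rw [Finset.mem_powerset] at hT
      have hcard : (T.subtype (· ∈ Λ) : Finset {x // x ∈ Λ}).card = T.card := by
        rw [Finset.card_subtype,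
          Finset.filter_true_of_mem fun x hx => (Finset.mem_sdiff.mp (hT hx)).1]
      have hTΛ : T ⊆ Λ := fun x hx => (Finset.mem_sdiff.mp (hT hx)).1
      have hun : (z ∪ T.subtype (· ∈ Λ) : Finset {x // x ∈ Λ}) = (ζ ∪ T).subtype (· ∈ Λ) := by
        rw [hz, subtype_union_eq]
      have hdet : (Matrix.of fun i j : ((ζ ∪ T).subtype (· ∈ Λ) : Finset {x // x ∈ Λ}) =>
          M ↑i ↑j).det = (Matrix.of fun i j : (ζ ∪ T : Finset E) => matEnt K ↑i ↑j).det :=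
        det_subtype Λ (fun i j => M i j) (ζ ∪ T) (Finset.union_subset hζ hTΛ)
      rw [hcard, hun, hdet]
  rw [hsum]
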